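/- The limit as N → ∞ of (1/N)·Σ_{n=1}^{N} p_n minus the maximum of P(·,N) equals 1/2 - 2(ϑ - ϑ²), where p_n is as in the complete-information problem, P(r,N) = Σ_{i=r+1}^{N} 2(i-r)r/(i(i-1)N), and ϑ is the root of -log x - 2 + 2x = 0 in (0,1). -/

import Mathlib

/-- The optimal success probability in the best-or-worst secretary problem with `n` objects. -/
noncomputable def optProb (n : ℕ) : ℝ :=
  if n ≤ 2 then 1
  else if Even n then (n : ℝ) / (2 * ((n : ℝ) - 1))
  else ((n : ℝ) + 1) / (2 * n)

/-- The success probability of the cutoff strategy `r` when the number of objects is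
uniform on `[1,n]` in the best-or-worst secretary problem. -/
noncomputable def uniformProb (r n : ℕ) : ℝ :=
  ∑ i ∈ Finset.Icc (r + 1) n, 2 * ((i : ℝ) - r) * r / (i * (i - 1) * n)

noncomputable def Hm (n : ℕ) : ℝ := ∑ i ∈ Finset.Icc 1 n, 1/(i:ℝ)

noncomputable def fbw (x : ℝ) : ℝ := 2*x*(x - 1 - Real.log x)

noncomputable def Sbw (r N : ℕ) : ℝ :=
  ∑ i ∈ Finset.Icc (r + 1) N, 2 * ((i : ℝ) - r) * r / (i * (i - 1))

lemma Hm_succ (n : ℕ) : Hm (n+1) = Hm n + 1/((n:ℝ)+1) := by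
  unfold Hm
  rw [Finset.sum_Icc_succ_top (Nat.le_add_left 1 n)]
  push_cast; ring

lemma uniformProb_eq (r N : ℕ) : uniformProb r N = Sbw r N / N := by
  unfold uniformProb Sbw
  rw [Finset.sum_div]
  exact Finset.sum_congr rfl fun i _ => by rw [div_div]

lemma Sbw_closed (r N : ℕ) (hr : 1 ≤ r) (hN : r ≤ N) :
    Sbw r N = 2*(r:ℝ) * ((Hm N - Hm r) + (1 - (r:ℝ))*(1/r - 1/N)) := by
  induction N, hN using Nat.le_induction with
  | base =>
    unfold Sbw
    rw [Finset.Icc_eq_empty (by omega)]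
    simp
  | succ N hN ih =>
    have hr0 : (0:ℝ) < r := by exact_mod_cast hr
    have hN0 : (0:ℝ) < N := by exact_mod_cast Nat.lt_of_lt_of_le hr hN
    have hN1 : (0:ℝ) < (N:ℝ) + 1 := by linarith
    unfold Sbw at *
    rw [Finset.sum_Icc_succ_top (by omega), ih, Hm_succ]
    push_cast
    field_simp
    ring_nf
    field_simp
    ring

lemma tele (φ : ℕ → ℝ) (r N : ℕ) (h : r ≤ N) :
    ∑ i ∈ Finset.Icc (r+1) N, (φ i - φ (i-1)) = φ N - φ r := by
  induction N, h using Nat.le_induction with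
  | base => simp
  | succ N hN ih =>
    rw [Finset.sum_Icc_succ_top (by omega)]
    simp only [Nat.add_sub_cancel] at *
    rw [ih]; ring

lemma Hm_diff (r N : ℕ) (h : r ≤ N) :
    Hm N - Hm r = ∑ i ∈ Finset.Icc (r+1) N, 1/(i:ℝ) := by
  induction N, h using Nat.le_induction with
  | base => simp
  | succ N hN ih =>
    rw [Finset.sum_Icc_succ_top (by omega), Hm_succ, ← ih]; push_cast; ring

lemma Hm_diff_le (r N : ℕ) (hr : 1 ≤ r) (h : r ≤ N) :
    Hm N - Hm r ≤ Real.log N - Real.log r := by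
  rw [Hm_diff r N h]
  have := tele (fun i => Real.log i) r N h
  rw [← this]
  apply Finset.sum_le_sum
  intro i hi
  rw [Finset.mem_Icc] at hi
  have h2 : 2 ≤ i := by omega
  have hi0 : (0:ℝ) < (i:ℝ) - 1 := by
    have : (2:ℝ) ≤ i := by exact_mod_cast h2
    linarith
  have hipos : (0:ℝ) < i := by linarith
  have hcast : ((i-1 : ℕ) : ℝ) = (i:ℝ) - 1 := by
    have : 1 ≤ i := by omega
    push_cast [this]; ring
  simp only [hcast]
  have hlog := Real.log_le_sub_one_of_pos (x := ((i:ℝ)-1)/i) (by positivity)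
  rw [Real.log_div (by linarith) (by linarith)] at hlog
  have : ((i:ℝ)-1)/i - 1 = -(1/i) := by field_simp; ring
  rw [this] at hlog
  linarith

lemma Hm_diff_ge (r N : ℕ) (hr : 1 ≤ r) (h : r ≤ N) :
    Real.log N - Real.log r - 1/r ≤ Hm N - Hm r := by
  rw [Hm_diff r N h]
  have hr0 : (0:ℝ) < r := by exact_mod_cast hr
  have hN0 : (0:ℝ) < N := by exact_mod_cast Nat.lt_of_lt_of_le hr h
  have htel := tele (fun i => Real.log (i+1)) r N h
  have hsum : Real.log (N+1) - Real.log (r+1) ≤ ∑ i ∈ Finset.Icc (r+1) N, 1/(i:ℝ) := by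
    rw [← htel]
    apply Finset.sum_le_sum
    intro i hi
    rw [Finset.mem_Icc] at hi
    have h1 : 1 ≤ i := by omega
    have hi0 : (0:ℝ) < i := by exact_mod_cast Nat.lt_of_lt_of_le hr (by omega)
    have hcast : ((i-1 : ℕ) : ℝ) = (i:ℝ) - 1 := by push_cast [h1]; ring
    simp only [hcast]
    have : (i:ℝ) - 1 + 1 = i := by ring
    rw [this]
    have hlog := Real.log_le_sub_one_of_pos (x := ((i:ℝ)+1)/i) (by positivity)
    rw [Real.log_div (by linarith) (by linarith)] at hlog
    have h2 : ((i:ℝ)+1)/i - 1 = 1/i := by field_simp; ring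
    rw [h2] at hlog
    linarith
  have h1 : Real.log N ≤ Real.log ((N:ℝ)+1) := Real.log_le_log (by linarith) (by linarith)
  have h2 : Real.log ((r:ℝ)+1) ≤ Real.log r + 1/r := by
    have hlog := Real.log_le_sub_one_of_pos (x := ((r:ℝ)+1)/r) (by positivity)
    rw [Real.log_div (by linarith) (by linarith)] at hlog
    have : ((r:ℝ)+1)/r - 1 = 1/r := by field_simp; ring
    rw [this] at hlog
    linarith
  push_cast at hsum
  linarith

lemma estimate (r N : ℕ) (hr : 1 ≤ r) (hN : r ≤ N) :
    |uniformProb r N - fbw ((r:ℝ)/N)| ≤ 6/N := by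
  have hr0 : (0:ℝ) < r := by exact_mod_cast hr
  have hN0 : (0:ℝ) < N := by exact_mod_cast Nat.lt_of_lt_of_le (by omega : 0 < r) hN
  have hRN : (r:ℝ) ≤ N := by exact_mod_cast hN
  set Δ : ℝ := (Hm N - Hm r) - (Real.log N - Real.log r) with hΔ
  have hup : Δ ≤ 0 := by
    have := Hm_diff_le r N hr hN; rw [hΔ]; linarith
  have hlo : -(1/(r:ℝ)) ≤ Δ := by
    have := Hm_diff_ge r N hr hN; rw [hΔ]; linarith
  have hpos : (0:ℝ) ≤ 2*(r:ℝ)/N := by positivity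
  have key : uniformProb r N - fbw ((r:ℝ)/N) = (2*(r:ℝ)/N) * (Δ + 1/r - 1/N) := by
    rw [uniformProb_eq, Sbw_closed r N hr hN]
    unfold fbw
    rw [Real.log_div (by positivity) (by positivity), hΔ]
    field_simp
    ring
  rw [key, abs_le]
  constructor
  · have h1 : -(1/(N:ℝ)) ≤ Δ + 1/r - 1/N := by linarith
    have e1 := mul_le_mul_of_nonneg_left h1 hpos
    have e2 : (2*(r:ℝ)/N) * (-(1/N)) = -(2*(r:ℝ)/((N:ℝ)*N)) := by ring
    have e3 : 2*(r:ℝ)/((N:ℝ)*N) ≤ 6/N := by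
      rw [div_le_div_iff₀ (by positivity) (by positivity)]
      nlinarith
    linarith [e1, e3, e2 ▸ e1]
  · have h1 : Δ + 1/r - 1/N ≤ 1/r := by
      have : (0:ℝ) < 1/N := by positivity
      linarith
    have e1 := mul_le_mul_of_nonneg_left h1 hpos
    have e2 : (2*(r:ℝ)/N) * (1/r) = 2/N := by field_simp
    have e3 : (2:ℝ)/N ≤ 6/N := by
      gcongr <;> norm_num
    linarith [e2 ▸ e1]

noncomputable def gbw (x : ℝ) : ℝ := 4*x - 4 - 2*Real.log x

lemma hasDerivAt_fbw {x : ℝ} (hx : 0 < x) : HasDerivAt fbw (gbw x) x := by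
  have h1 : HasDerivAt (fun y : ℝ => y - 1 - Real.log y) (1 - x⁻¹) x :=
    ((hasDerivAt_id x).sub_const 1).sub (Real.hasDerivAt_log hx.ne')
  have h2 : HasDerivAt (fun y : ℝ => 2*y) 2 x := by
    simpa using (hasDerivAt_id x).const_mul 2
  have := h2.mul h1
  refine this.congr_deriv ?_
  unfold gbw
  field_simp
  ring

lemma hasDerivAt_gbw {x : ℝ} (hx : 0 < x) : HasDerivAt gbw (4 - 2/x) x := by
  have h1 : HasDerivAt (fun y : ℝ => 4*y - 4) 4 x := by
    simpa using ((hasDerivAt_id x).const_mul 4).sub_const 4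
  have h2 : HasDerivAt (fun y : ℝ => 2*Real.log y) (2*x⁻¹) x :=
    (Real.hasDerivAt_log hx.ne').const_mul 2
  have := h1.sub h2
  exact this.congr_deriv (by ring)

lemma gbw_anti {a b : ℝ} (ha : 0 < a) (hab : a ≤ b) (hb : b ≤ 1/2) : gbw b ≤ gbw a := by
  have : AntitoneOn gbw (Set.Icc a b) := by
    apply antitoneOn_of_deriv_nonpos (convex_Icc a b)
    · exact fun y hy => (hasDerivAt_gbw (lt_of_lt_of_le ha hy.1)).continuousAt.continuousWithinAt
    · intro y hy
      rw [interior_Icc] at hy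
      exact (hasDerivAt_gbw (lt_trans ha hy.1)).differentiableAt.differentiableWithinAt
    · intro y hy
      rw [interior_Icc] at hy
      have hy0 : 0 < y := lt_trans ha hy.1
      rw [(hasDerivAt_gbw hy0).deriv]
      have hy2 : y ≤ 1/2 := le_of_lt (lt_of_lt_of_le hy.2 hb)
      have : 4 ≤ 2/y := by
        rw [le_div_iff₀ hy0]; linarith
      linarith
  exact this (Set.left_mem_Icc.2 hab) (Set.right_mem_Icc.2 hab) hab

lemma gbw_mono {a b : ℝ} (ha : 1/2 ≤ a) (hab : a ≤ b) : gbw a ≤ gbw b := by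
  have ha0 : (0:ℝ) < a := by linarith
  have : MonotoneOn gbw (Set.Icc a b) := by
    apply monotoneOn_of_deriv_nonneg (convex_Icc a b)
    · exact fun y hy => (hasDerivAt_gbw (lt_of_lt_of_le ha0 hy.1)).continuousAt.continuousWithinAt
    · intro y hy
      rw [interior_Icc] at hy
      exact (hasDerivAt_gbw (lt_trans ha0 hy.1)).differentiableAt.differentiableWithinAt
    · intro y hy
      rw [interior_Icc] at hy
      have hy0 : 0 < y := lt_trans ha0 hy.1
      rw [(hasDerivAt_gbw hy0).deriv]
      have : 2/y ≤ 4 := by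
        rw [div_le_iff₀ hy0]; nlinarith [lt_of_le_of_lt ha hy.1]
      linarith
  exact this (Set.left_mem_Icc.2 hab) (Set.right_mem_Icc.2 hab) hab

lemma gbw_one : gbw (1:ℝ) = 0 := by
  unfold gbw; simp

section Theta
variable {ϑ : ℝ} (hϑ : ϑ ∈ Set.Ioo (0:ℝ) 1) (heq : Real.log ϑ = 2 * ϑ - 2)
include hϑ heq

lemma theta_lt_half : ϑ < 1/2 := by
  obtain ⟨h0, h1⟩ := hϑ
  have hinv : ϑ⁻¹ ≠ 1 := by
    intro h
    have : ϑ = 1 := by field_simp at h; linarith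
    linarith
  have h := Real.log_lt_sub_one_of_pos (inv_pos.2 h0) hinv
  rw [Real.log_inv, heq] at h
  have hmul := mul_lt_mul_of_pos_right h h0
  rw [sub_mul, inv_mul_cancel₀ (ne_of_gt h0)] at hmul
  nlinarith

lemma gbw_theta : gbw ϑ = 0 := by
  unfold gbw; rw [heq]; ring

lemma fbw_max {x : ℝ} (hx : 0 < x) (hx1 : x ≤ 1) : fbw x ≤ fbw ϑ := by
  have h0 := hϑ.1
  have h1 := hϑ.2
  have hhalf := theta_lt_half hϑ heq
  rcases le_total x ϑ with hc | hc
  · have hmono : MonotoneOn fbw (Set.Icc x ϑ) := by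
      apply monotoneOn_of_deriv_nonneg (convex_Icc x ϑ)
      · exact fun y hy => (hasDerivAt_fbw (lt_of_lt_of_le hx hy.1)).continuousAt.continuousWithinAt
      · intro y hy
        rw [interior_Icc] at hy
        exact (hasDerivAt_fbw (lt_trans hx hy.1)).differentiableAt.differentiableWithinAt
      · intro y hy
        rw [interior_Icc] at hy
        have hy0 : 0 < y := lt_trans hx hy.1
        rw [(hasDerivAt_fbw hy0).deriv]
        have := gbw_anti hy0 (le_of_lt hy.2) (le_of_lt hhalf)
        rw [gbw_theta hϑ heq] at this
        linarith
    exact hmono (Set.left_mem_Icc.2 hc) (Set.right_mem_Icc.2 hc) hc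
  · have hanti : AntitoneOn fbw (Set.Icc ϑ x) := by
      apply antitoneOn_of_deriv_nonpos (convex_Icc ϑ x)
      · exact fun y hy => (hasDerivAt_fbw (lt_of_lt_of_le h0 hy.1)).continuousAt.continuousWithinAt
      · intro y hy
        rw [interior_Icc] at hy
        exact (hasDerivAt_fbw (lt_trans h0 hy.1)).differentiableAt.differentiableWithinAt
      · intro y hy
        rw [interior_Icc] at hy
        have hy0 : 0 < y := lt_trans h0 hy.1
        rw [(hasDerivAt_fbw hy0).deriv]
        rcases le_total y (1/2) with hyc | hyc
        · have := gbw_anti h0 (le_of_lt hy.1) hyc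
          rw [gbw_theta hϑ heq] at this
          linarith
        · have := gbw_mono hyc (le_trans (le_of_lt hy.2) hx1)
          rw [gbw_one] at this
          linarith
    exact hanti (Set.left_mem_Icc.2 hc) (Set.right_mem_Icc.2 hc) hc

lemma fbw_theta : fbw ϑ = 2*(ϑ - ϑ^2) := by
  unfold fbw; rw [heq]; ring

end Theta

lemma optProb_tendsto : Filter.Tendsto optProb Filter.atTop (nhds (1/2)) := by
  rw [← tendsto_sub_nhds_zero_iff]
  apply squeeze_zero_norm' (a := fun n : ℕ => 1/(n:ℝ)) ?_ tendsto_one_div_atTop_nhds_zero_nat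
  filter_upwards [Filter.eventually_ge_atTop 3] with n hn
  have hn3 : (3:ℝ) ≤ (n:ℝ) := by exact_mod_cast hn
  unfold optProb
  rw [if_neg (by omega)]
  rcases em (Even n) with he | he
  · rw [if_pos he]
    have h1 : (0:ℝ) < (n:ℝ) - 1 := by linarith
    have : (n:ℝ) / (2 * ((n:ℝ) - 1)) - 1/2 = 1/(2*((n:ℝ)-1)) := by
      field_simp; ring
    rw [this, Real.norm_eq_abs, abs_of_pos (by positivity)]
    rw [div_le_div_iff₀ (by positivity) (by linarith)]
    linarith
  · rw [if_neg he]
    have : ((n:ℝ) + 1) / (2 * n) - 1/2 = 1/(2*(n:ℝ)) := by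
      field_simp; ring
    rw [this, Real.norm_eq_abs, abs_of_pos (by positivity)]
    rw [div_le_div_iff₀ (by positivity) (by linarith)]
    linarith

lemma avg_tendsto :
    Filter.Tendsto (fun N : ℕ => (1/(N:ℝ)) * ∑ n ∈ Finset.Icc 1 N, optProb n)
      Filter.atTop (nhds (1/2)) := by
  have h := (optProb_tendsto.comp (Filter.tendsto_add_atTop_nat 1)).cesaro
  convert h using 2 with N
  rw [one_div]
  congr 1
  rw [← Finset.Ico_add_one_right_eq_Icc, Finset.sum_Ico_eq_sum_range]
  simp [Function.comp, add_comm]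

lemma uniformProb_zero (N : ℕ) : uniformProb 0 N = 0 := by
  unfold uniformProb; simp

theorem stmt_13 (ϑ : ℝ) (hϑ : ϑ ∈ Set.Ioo (0 : ℝ) 1)
    (heq : Real.log ϑ = 2 * ϑ - 2) :
    Filter.Tendsto
      (fun N : ℕ => (1 / (N : ℝ)) * ∑ n ∈ Finset.Icc 1 N, optProb n -
        (Finset.Icc 0 N).sup' ⟨0, Finset.mem_Icc.2 ⟨le_rfl, Nat.zero_le N⟩⟩
          (fun r => uniformProb r N))
      Filter.atTop (nhds (1 / 2 - 2 * (ϑ - ϑ ^ 2))) := by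
  have h0 := hϑ.1
  have h1 := hϑ.2
  have hfθ : fbw ϑ = 2*(ϑ - ϑ^2) := fbw_theta hϑ heq
  have hθpos : 0 < fbw ϑ := by rw [hfθ]; nlinarith
  set M : ℕ → ℝ := fun N =>
    (Finset.Icc 0 N).sup' ⟨0, Finset.mem_Icc.2 ⟨le_rfl, Nat.zero_le N⟩⟩
      (fun r => uniformProb r N) with hM
  have hub : ∀ N : ℕ, 1 ≤ N → M N ≤ fbw ϑ + 6/N := by
    intro N hN
    have hN0 : (0:ℝ) < N := by exact_mod_cast hN
    apply Finset.sup'_le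
    intro r hr
    rw [Finset.mem_Icc] at hr
    rcases Nat.eq_zero_or_pos r with h | h
    · rw [h, uniformProb_zero]
      positivity
    · have hest := estimate r N h hr.2
      have hr0 : (0:ℝ) < r := by exact_mod_cast h
      have hrN : (r:ℝ) ≤ N := by exact_mod_cast hr.2
      have hle := fbw_max hϑ heq (x := (r:ℝ)/N) (by positivity)
        ((div_le_one hN0).2 hrN)
      have := (abs_le.1 hest).2
      linarith
  have hlb : ∀ N : ℕ, 1 ≤ N → fbw ((⌈ϑ*N⌉₊:ℝ)/N) - 6/N ≤ M N := by
    intro N hN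
    have hN0 : (0:ℝ) < N := by exact_mod_cast hN
    set r : ℕ := ⌈ϑ*N⌉₊ with hrdef
    have hr1 : 1 ≤ r := Nat.one_le_iff_ne_zero.2 (by
      simp only [hrdef, ne_eq, Nat.ceil_eq_zero, not_le]
      positivity)
    have hrN : r ≤ N := Nat.ceil_le.2 (by nlinarith)
    have hest := estimate r N hr1 hrN
    have hmem : r ∈ Finset.Icc 0 N := Finset.mem_Icc.2 ⟨Nat.zero_le r, hrN⟩
    have hsup := Finset.le_sup' (fun r => uniformProb r N) hmem
    have := (abs_le.1 hest).1
    simp only [hM]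
    linarith
  have hx : Filter.Tendsto (fun N : ℕ => (⌈ϑ*N⌉₊:ℝ)/N) Filter.atTop (nhds ϑ) := by
    have hup : Filter.Tendsto (fun N : ℕ => ϑ + 1/(N:ℝ)) Filter.atTop (nhds ϑ) := by
      simpa using (tendsto_const_nhds (x := ϑ) (f := Filter.atTop)).add
        (tendsto_const_div_atTop_nhds_zero_nat 1)
    apply tendsto_of_tendsto_of_tendsto_of_le_of_le' tendsto_const_nhds hup
    · filter_upwards [Filter.eventually_ge_atTop 1] with N hN
      have hN0 : (0:ℝ) < N := by exact_mod_cast hN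
      rw [le_div_iff₀ hN0]
      exact Nat.le_ceil _
    · filter_upwards [Filter.eventually_ge_atTop 1] with N hN
      have hN0 : (0:ℝ) < N := by exact_mod_cast hN
      rw [div_le_iff₀ hN0]
      have h2 : (⌈ϑ*N⌉₊:ℝ) ≤ ϑ*N + 1 := by
        have := Nat.ceil_lt_add_one (by positivity : (0:ℝ) ≤ ϑ*N)
        linarith
      have : (ϑ + 1/(N:ℝ)) * N = ϑ*N + 1 := by field_simp
      linarith [this ▸ h2]
  have hfx : Filter.Tendsto (fun N : ℕ => fbw ((⌈ϑ*N⌉₊:ℝ)/N)) Filter.atTop (nhds (fbw ϑ)) :=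
    ((hasDerivAt_fbw h0).continuousAt.tendsto).comp hx
  have h6 := tendsto_const_div_atTop_nhds_zero_nat (6:ℝ)
  have hMl : Filter.Tendsto M Filter.atTop (nhds (fbw ϑ)) := by
    have hlo2 : Filter.Tendsto (fun N : ℕ => fbw ((⌈ϑ*N⌉₊:ℝ)/N) - 6/N) Filter.atTop (nhds (fbw ϑ)) := by
      simpa using hfx.sub h6
    have hup2 : Filter.Tendsto (fun N : ℕ => fbw ϑ + 6/(N:ℝ)) Filter.atTop (nhds (fbw ϑ)) := by
      simpa using (tendsto_const_nhds (x := fbw ϑ) (f := Filter.atTop)).add h6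
    apply tendsto_of_tendsto_of_tendsto_of_le_of_le' hlo2 hup2
    · filter_upwards [Filter.eventually_ge_atTop 1] with N hN
      exact hlb N hN
    · filter_upwards [Filter.eventually_ge_atTop 1] with N hN
      exact hub N hN
  have hfin := avg_tendsto.sub hMl
  have : 1/2 - fbw ϑ = 1/2 - 2*(ϑ - ϑ^2) := by rw [hfθ]
  rw [← this]
  exact hfin
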